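/- Let ω = e^{2πi/3}, Λ = ℤω ⊕ ℤ, ⟨z,w⟩ := Re(z·conj(w)), K = 4π/3 and z_S = i/√3. Suppose f : ℂ → ℂ satisfies f(z+γ) = e^{−i⟨γ,K⟩}f(z) for all γ ∈ Λ and f(ωz) = f(z) for all z ∈ ℂ. Then for all ζ ∈ ℂ: f(z_S + ωζ) = ω̄·f(z_S + ζ) and f(−z_S + ωζ) = ω·f(−z_S + ζ). -/

import Mathlib

open Complex

noncomputable section

/-- `ω = e^{2πi/3}`. -/
def ω : ℂ := Complex.exp (2 * (Real.pi : ℂ) * Complex.I / 3)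

/-- The hexagonal lattice `Λ = ℤω ⊕ ℤ`. -/
def inΛ (γ : ℂ) : Prop := ∃ m n : ℤ, γ = (m : ℂ) * ω + (n : ℂ)

/-- The pairing `⟨z,w⟩ = Re (z ⬝ conj w)`. -/
def pairing (z w : ℂ) : ℝ := (z * (starRingEnd ℂ) w).re

/-- The Dirac momentum `K = 4π/3`. -/
def Kpt : ℂ := 4 * (Real.pi : ℂ) / 3

/-- The stacking point `z_S = i/√3`. -/
def zS : ℂ := Complex.I / (Real.sqrt 3 : ℂ)

lemma ω_eq : ω = -1/2 + (Real.sqrt 3 / 2 : ℝ) * Complex.I := by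
  have h : (2 * (Real.pi : ℂ) * Complex.I / 3) = ((2 * Real.pi / 3 : ℝ) : ℂ) * Complex.I := by
    push_cast; ring
  rw [ω, h, Complex.exp_mul_I, ← Complex.ofReal_cos, ← Complex.ofReal_sin]
  have hc : Real.cos (2 * Real.pi / 3) = -(1/2) := by
    have h2 : 2 * Real.pi / 3 = Real.pi - Real.pi / 3 := by ring
    rw [h2, Real.cos_pi_sub, Real.cos_pi_div_three]
  have hs : Real.sin (2 * Real.pi / 3) = Real.sqrt 3 / 2 := by
    have h2 : 2 * Real.pi / 3 = Real.pi - Real.pi / 3 := by ring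
    rw [h2, Real.sin_pi_sub, Real.sin_pi_div_three]
  rw [hc, hs]
  push_cast; ring

lemma sqrt3_ne : ((Real.sqrt 3 : ℝ) : ℂ) ≠ 0 := by
  simp

lemma sqrt3_sq : ((Real.sqrt 3 : ℝ) : ℂ) ^ 2 = 3 := by
  rw [← Complex.ofReal_pow, Real.sq_sqrt (by norm_num : (0:ℝ) ≤ 3)]
  norm_num

lemma hzS : ω * zS + (ω + 1) = zS := by
  have hne := sqrt3_ne
  rw [ω_eq, zS]
  field_simp
  push_cast
  linear_combination Complex.I * sqrt3_sq + ((Real.sqrt 3 : ℝ):ℂ) * Complex.I_sq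

lemma pair1 : pairing (ω + 1) Kpt = 2 * Real.pi / 3 := by
  have hK : Kpt = ((4 * Real.pi / 3 : ℝ) : ℂ) := by rw [Kpt]; push_cast; ring
  rw [pairing, hK, Complex.conj_ofReal, Complex.mul_re]
  simp [ω_eq]
  ring

lemma pair2 : pairing (-(ω + 1)) Kpt = -(2 * Real.pi / 3) := by
  have : pairing (-(ω + 1)) Kpt = - pairing (ω + 1) Kpt := by
    simp [pairing]
    ring
  rw [this, pair1]

lemma exp1 : Complex.exp (-Complex.I * ((2 * Real.pi / 3 : ℝ) : ℂ)) = (starRingEnd ℂ) ω := by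
  have h : (2 * (Real.pi : ℂ) * Complex.I / 3) = ((2 * Real.pi / 3 : ℝ) : ℂ) * Complex.I := by
    push_cast; ring
  rw [ω, h, ← Complex.exp_conj, map_mul, Complex.conj_ofReal, Complex.conj_I]
  congr 1
  ring

lemma exp2 : Complex.exp (-Complex.I * ((-(2 * Real.pi / 3) : ℝ) : ℂ)) = ω := by
  rw [ω]
  congr 1
  push_cast; ring

lemma memΛ1 : inΛ (ω + 1) := ⟨1, 1, by push_cast; ring⟩
lemma memΛ2 : inΛ (-(ω + 1)) := ⟨-1, -1, by push_cast; ring⟩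

theorem stmt12 (f : ℂ → ℂ)
    (hf1 : ∀ γ : ℂ, inΛ γ → ∀ z : ℂ,
      f (z + γ) = Complex.exp (-Complex.I * (pairing γ Kpt : ℂ)) * f z)
    (hf2 : ∀ z : ℂ, f (ω * z) = f z) :
    ∀ ζ : ℂ, f (zS + ω * ζ) = (starRingEnd ℂ) ω * f (zS + ζ) ∧
      f (-zS + ω * ζ) = ω * f (-zS + ζ) := by
  intro ζ
  constructor
  · have key : zS + ω * ζ = ω * (zS + ζ) + (ω + 1) := by linear_combination -hzS
    rw [key, hf1 (ω + 1) memΛ1 (ω * (zS + ζ)), hf2, pair1, exp1]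
  · have key : -zS + ω * ζ = ω * (-zS + ζ) + (-(ω + 1)) := by linear_combination hzS
    rw [key, hf1 (-(ω + 1)) memΛ2 (ω * (-zS + ζ)), hf2, pair2, exp2]

end
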